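/- For n ≥ 2, the alternating sum Σ_{i≥1} (-1)^{i+1} Σ_{0=j_0 < j_1 < ... < j_i < n} 1/(j_2·j_3···j_i) equals n/2, where the inner sum is over all strictly increasing integer sequences 0 = j_0 < j_1 < ... < j_i < n, and the product over q from 2 to i is taken to be 1 when i = 1. -/

import Mathlib

noncomputable def fch (A : Finset ℕ) : ℚ :=
  (-1 : ℚ) ^ (A.card + 1) * (1 / ∏ j ∈ A.erase (WithTop.untopD 0 A.min), (j : ℚ))

lemma fch_empty : fch ∅ = -1 := by simp [fch]

lemma fch_singleton (a : ℕ) : fch {a} = 1 := by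
  have h1 : ({a} : Finset ℕ).min = (a : WithTop ℕ) := Finset.min_singleton
  have h2 : WithTop.untopD 0 ({a} : Finset ℕ).min = a := by rw [h1]; rfl
  rw [fch, h2]
  norm_num

lemma fch_insert {A : Finset ℕ} (hA : A.Nonempty) {a : ℕ}
    (ha : ∀ x ∈ A, x < a) :
    fch (insert a A) = (-1 / a) * fch A := by
  have hnm : a ∉ A := fun h => lt_irrefl a (ha a h)
  set b := A.min' hA with hb
  have hmin : A.min = (b : WithTop ℕ) := (Finset.coe_min' hA).symm
  have hba : b < a := ha b (A.min'_mem hA)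
  have hmins : (insert a A).min = (b : WithTop ℕ) := by
    rw [Finset.min_insert, hmin]
    exact min_eq_right (WithTop.coe_le_coe.2 hba.le)
  have hne : a ≠ b := hba.ne'
  have herase : (insert a A).erase b = insert a (A.erase b) :=
    Finset.erase_insert_of_ne hne
  have hnam : a ∉ A.erase b := fun h => hnm (Finset.mem_of_mem_erase h)
  have hu1 : WithTop.untopD 0 (insert a A).min = b := by rw [hmins]; rfl
  have hu2 : WithTop.untopD 0 A.min = b := by rw [hmin]; rfl
  rw [fch, fch, hu1, hu2, herase,
    Finset.prod_insert hnam, Finset.card_insert_of_notMem hnm,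
    pow_succ, ← one_div_mul_one_div]
  ring

lemma aux_sum : ∀ m : ℕ, 1 ≤ m →
    ∑ A ∈ (Finset.Icc 1 m).powerset, fch A = ((m : ℚ) - 1) / 2 := by
  intro m hm
  induction m, hm using Nat.le_induction with
  | base =>
    rw [show (Finset.Icc 1 1).powerset = {∅, {1}} by decide]
    rw [Finset.sum_pair (by decide), fch_empty, fch_singleton]
    norm_num
  | succ m hm ih =>
    have hnotmem : m + 1 ∉ Finset.Icc 1 m := by simp
    have hins : Finset.Icc 1 (m + 1) = insert (m + 1) (Finset.Icc 1 m) := by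
      ext x; simp [Finset.mem_Icc]; omega
    rw [hins, Finset.sum_powerset_insert hnotmem]
    have h2 : ∑ A ∈ (Finset.Icc 1 m).powerset, fch (insert (m + 1) A)
        = 1 + (-1 / (m + 1)) *
          (∑ A ∈ (Finset.Icc 1 m).powerset, fch A + 1) := by
      rw [← Finset.add_sum_erase _ _ (Finset.empty_mem_powerset (Finset.Icc 1 m))]
      rw [show fch (insert (m + 1) ∅) = 1 from fch_singleton (m + 1)]
      have hcong : ∑ A ∈ (Finset.Icc 1 m).powerset.erase ∅, fch (insert (m + 1) A)
          = ∑ A ∈ (Finset.Icc 1 m).powerset.erase ∅, (-1 / ((m : ℚ) + 1)) * fch A := by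
        refine Finset.sum_congr rfl (fun A hA => ?_)
        obtain ⟨hAne, hAs⟩ := Finset.mem_erase.mp hA
        have := fch_insert (Finset.nonempty_of_ne_empty hAne)
          (a := m + 1) (fun x hx => by
            have := Finset.mem_Icc.mp (Finset.mem_powerset.mp hAs hx)
            omega)
        rw [this]
        push_cast
        ring
      rw [hcong, ← Finset.mul_sum,
        Finset.sum_erase_eq_sub (Finset.empty_mem_powerset _), fch_empty]
      ring
    rw [h2, ih]
    have : (m : ℚ) + 1 ≠ 0 := by positivity
    field_simp
    push_cast
    ring

/-- For `n ≥ 2`, the alternating sum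
`Σ_{i≥1} (-1)^{i+1} Σ_{0=j_0<j_1<⋯<j_i<n} 1/(j_2⋯j_i)` equals `n/2`.
A chain `0 = j_0 < j_1 < ⋯ < j_i < n` is encoded by the nonempty set
`A = {j_1, …, j_i} ⊆ {1, …, n-1}`; then `i = |A|`, and
`∏_{q=2}^{i} j_q = ∏ over A minus its minimum` (which is `1` when `i = 1`). -/
theorem alternating_chain_sum_eq_half (n : ℕ) (hn : 2 ≤ n) :
    ∑ A ∈ (Finset.Icc 1 (n - 1)).powerset.filter (fun A => A ≠ ∅),
      (-1 : ℚ) ^ (A.card + 1) * (1 / ∏ j ∈ A.erase (WithTop.untopD 0 A.min), (j : ℚ)) =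
      (n : ℚ) / 2 := by

  have key := aux_sum (n - 1) (by omega)
  have hcast : ((n - 1 : ℕ) : ℚ) = (n : ℚ) - 1 := by
    have : (1 : ℕ) ≤ n := by omega
    push_cast [this]
    ring
  calc ∑ A ∈ (Finset.Icc 1 (n - 1)).powerset.filter (fun A => A ≠ ∅),
      (-1 : ℚ) ^ (A.card + 1) * (1 / ∏ j ∈ A.erase (WithTop.untopD 0 A.min), (j : ℚ))
      = ∑ A ∈ (Finset.Icc 1 (n - 1)).powerset.erase ∅, fch A := by
        rw [Finset.filter_ne']
        exact Finset.sum_congr rfl fun _ _ => rfl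
    _ = ∑ A ∈ (Finset.Icc 1 (n - 1)).powerset, fch A - fch ∅ :=
        Finset.sum_erase_eq_sub (Finset.empty_mem_powerset _)
    _ = (n : ℚ) / 2 := by rw [key, fch_empty, hcast]; ring
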